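/- arXiv:2303.17739 — 3 statements merged into one kernel-verified Lean document; each statement's English description precedes it below -/
import Mathlib

section
/- Let M be a compact metric space and G a group of homeomorphisms of M acting transitively on M, and let f : M → M be a homeomorphism commuting with every element of G. Suppose that for every ε > 0 there is δ > 0 such that for all x, x' ∈ M with dist(x, x') < δ there exists φ ∈ G with φ(x) = x' and dist_{C⁰}(φ, id) < ε and dist_{C⁰}(φ⁻¹, id) < ε. Then the family of iterates {fⁿ : n ∈ ℤ} is uniformly equicontinuous. -/
/-- If a group `G` of homeomorphisms of a compact metric space `M` acts
transitively, commutes with a homeomorphism `f`, and nearby points can be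
mapped to each other by elements of `G` that are uniformly `C⁰`-close to the
identity (together with their inverses), then the family of iterates
`{fⁿ : n ∈ ℤ}` is uniformly equicontinuous. -/
theorem stmt4 {M : Type*} [MetricSpace M] [CompactSpace M]
    (f : M ≃ₜ M) (G : Set (M ≃ₜ M))
    (hgrp : (∀ φ ∈ G, ∀ ψ ∈ G, φ.trans ψ ∈ G) ∧ ∀ φ ∈ G, φ.symm ∈ G)
    (hcomm : ∀ φ ∈ G, ∀ x : M, φ (f x) = f (φ x))
    (htrans : ∀ x y : M, ∃ φ ∈ G, φ x = y)
    (hclose : ∀ ε > (0 : ℝ), ∃ δ > (0 : ℝ), ∀ x x' : M, dist x x' < δ →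
      ∃ φ ∈ G, φ x = x' ∧ (∀ y : M, dist (φ y) y < ε) ∧
        (∀ y : M, dist (φ.symm y) y < ε)) :
    ∀ ε > (0 : ℝ), ∃ δ > (0 : ℝ), ∀ (n : ℤ) (x y : M), dist x y < δ →
      dist ((f.toEquiv ^ n) x) ((f.toEquiv ^ n) y) < ε := by
  intro ε hε
  obtain ⟨δ, hδ, hδ'⟩ := hclose ε hε
  refine ⟨δ, hδ, fun n x y hxy => ?_⟩
  obtain ⟨φ, hφG, hφx, hφc, -⟩ := hδ' x y hxy
  have hc : Commute φ.toEquiv f.toEquiv := by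
    ext z
    exact hcomm φ hφG z
  have hcn := hc.zpow_right n
  have key : (f.toEquiv ^ n) y = φ ((f.toEquiv ^ n) x) := by
    have := congrFun (congrArg (fun (e : Equiv.Perm M) => (e : M → M)) hcn) x
    simp only [Equiv.Perm.coe_mul, Function.comp_apply] at this
    rw [← hφx]
    exact this.symm
  rw [key, dist_comm]
  exact hφc _
end

section
/- Let A be a compact metrizable topological space, B a locally compact Hausdorff space, and Φ : A → B a continuous map. Call a point x ∈ A regular if for every open neighborhood V of x, Φ(x) lies in the interior of Φ(V); call y ∈ B a regular value if every point of Φ⁻¹(y) is regular. Then the set of regular values of Φ is residual (comeager) in B. -/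
open TopologicalSpace Set

/-- (Avila–Santamaria–Viana) For a continuous map `Φ` from a compact
metrizable space to a locally compact Hausdorff space, the set of regular
values of `Φ` is residual. -/
theorem stmt7 {A B : Type*} [TopologicalSpace A] [CompactSpace A]
    [TopologicalSpace.MetrizableSpace A]
    [TopologicalSpace B] [LocallyCompactSpace B] [T2Space B]
    (Φ : A → B) (hΦ : Continuous Φ) :
    {y : B | ∀ x ∈ Φ ⁻¹' {y}, ∀ V : Set A, IsOpen V → x ∈ V →
      Φ x ∈ interior (Φ '' V)} ∈ residual B := by
  letI := TopologicalSpace.metrizableSpaceMetric A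
  haveI : SecondCountableTopology A := inferInstance
  -- countable basis of A
  set 𝒰 : Set (Set A) := countableBasis A with h𝒰
  have hbasis : IsTopologicalBasis 𝒰 := isBasis_countableBasis A
  -- key: each `Φ '' closure U` is closed, so its frontier is closed nowhere dense
  have hkey : ∀ U ∈ 𝒰, (frontier (Φ '' closure U))ᶜ ∈ residual B := by
    intro U _
    have hcl : IsClosed (Φ '' closure U) :=
      (isClosed_closure.isCompact.image hΦ).isClosed
    refine residual_of_dense_open isClosed_frontier.isOpen_compl ?_
    exact interior_eq_empty_iff_dense_compl.mp (interior_frontier hcl)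
  -- intersection over the countable basis is residual
  have hres : (⋂ U ∈ 𝒰, (frontier (Φ '' closure U))ᶜ) ∈ residual B := by
    refine (countable_bInter_mem (countable_countableBasis A)).mpr hkey
  refine Filter.mem_of_superset hres ?_
  intro y hy x hx V hV hxV
  simp only [mem_preimage, mem_singleton_iff] at hx
  -- find a basic set U with x ∈ U and closure U ⊆ V
  obtain ⟨t, htn, htc, hts⟩ := exists_mem_nhds_isClosed_subset (hV.mem_nhds hxV)
  obtain ⟨U, hU𝒰, hxU, hUt⟩ :=
    hbasis.exists_subset_of_mem_open (mem_interior_iff_mem_nhds.mpr htn) isOpen_interior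
  have hclU : closure U ⊆ V :=
    (closure_mono (hUt.trans interior_subset)).trans (htc.closure_subset.trans hts)
  -- y avoids the frontier of Φ '' closure U, and lies in that closed set
  have hy' : y ∉ frontier (Φ '' closure U) := by
    simpa using mem_iInter₂.mp hy U hU𝒰
  have hymem : y ∈ Φ '' closure U := ⟨x, subset_closure hxU, hx⟩
  have hcl : IsClosed (Φ '' closure U) :=
    (isClosed_closure.isCompact.image hΦ).isClosed
  have : y ∈ interior (Φ '' closure U) := by
    by_contra h
    exact hy' (hcl.frontier_eq ▸ ⟨hymem, h⟩)
  rw [hx]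
  exact interior_mono (image_mono (f := Φ) hclU) this
end

section
/- Let A be a compact metrizable space, B a locally compact Hausdorff Baire space, and Φ : A → B continuous. Then either the image of Φ is meager in B, or Φ has a regular point, i.e. there exists x ∈ A such that for every neighborhood V of x, Φ(x) ∈ interior(Φ(V)). -/
/-- For a continuous map `Φ` from a compact metrizable space to a locally
compact Hausdorff Baire space, either the image of `Φ` is meager or `Φ` has a
regular point. -/
theorem stmt8 {A B : Type*} [TopologicalSpace A] [CompactSpace A]
    [TopologicalSpace.MetrizableSpace A]
    [TopologicalSpace B] [LocallyCompactSpace B] [T2Space B] [BaireSpace B]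
    (Φ : A → B) (hΦ : Continuous Φ) :
    IsMeagre (Set.range Φ) ∨
      ∃ x : A, ∀ V ∈ nhds x, Φ x ∈ interior (Φ '' V) := by
  by_cases h : ∃ x : A, ∀ V ∈ nhds x, Φ x ∈ interior (Φ '' V)
  · exact Or.inr h
  left
  push_neg at h
  letI : MetricSpace A := TopologicalSpace.metrizableSpaceMetric A
  have hcov : ∀ n : ℕ, ∃ t : Finset A,
      (Set.univ : Set A) ⊆ ⋃ c ∈ t, Metric.ball c (1 / (n + 1)) := by
    intro n
    apply isCompact_univ.elim_finite_subcover (fun c : A => Metric.ball c (1 / (n + 1)))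
      (fun c => Metric.isOpen_ball)
    intro x _
    exact Set.mem_iUnion.mpr ⟨x, Metric.mem_ball_self (by positivity)⟩
  choose t ht using hcov
  set D : ℕ → A → Set B := fun n c =>
    Φ '' Metric.closedBall c (1 / (n + 1)) \ interior (Φ '' Metric.closedBall c (1 / (n + 1)))
    with hD
  rw [isMeagre_iff_countable_union_isNowhereDense]
  refine ⟨⋃ n : ℕ, (D n) '' ↑(t n), ?_, ?_, ?_⟩
  · rintro s hs
    obtain ⟨n, hn⟩ := Set.mem_iUnion.mp hs
    obtain ⟨c, _, rfl⟩ := hn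
    have hK : IsCompact (Φ '' Metric.closedBall c (1 / (n + 1))) :=
      (Metric.isClosed_closedBall.isCompact).image hΦ
    have hcl : IsClosed (D n c) := hK.isClosed.sdiff isOpen_interior
    rw [hcl.isNowhereDense_iff]
    rw [Set.eq_empty_iff_forall_notMem]
    intro b hb
    have h1 : b ∈ interior (Φ '' Metric.closedBall c (1 / (n + 1))) :=
      interior_mono Set.diff_subset hb
    exact (interior_subset hb).2 h1
  · exact Set.countable_iUnion fun n => ((t n).finite_toSet.image _).countable
  · rintro b ⟨x, rfl⟩
    obtain ⟨V, hV, hx⟩ := h x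
    obtain ⟨ε, hε, hball⟩ := Metric.mem_nhds_iff.mp hV
    obtain ⟨n, hn⟩ := exists_nat_one_div_lt (half_pos hε)
    have hx' : x ∈ ⋃ c ∈ t n, Metric.ball c (1 / (n + 1)) := ht n (Set.mem_univ x)
    simp only [Set.mem_iUnion] at hx'
    obtain ⟨c, hc, hxc⟩ := hx'
    have hsub : Metric.closedBall c (1 / (n + 1)) ⊆ V := by
      intro y hy
      apply hball
      rw [Metric.mem_ball]
      calc dist y x ≤ dist y c + dist c x := dist_triangle y c x
        _ < 1 / (n + 1) + 1 / (n + 1) := by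
            have := Metric.mem_closedBall.mp hy
            have h2 : dist c x < 1 / (n + 1) := by
              rw [dist_comm]; exact Metric.mem_ball.mp hxc
            linarith
        _ < ε := by linarith
    refine Set.mem_sUnion.mpr ⟨D n c, Set.mem_iUnion.mpr ⟨n, Set.mem_image_of_mem _ hc⟩, ?_⟩
    constructor
    · exact Set.mem_image_of_mem Φ (Metric.ball_subset_closedBall hxc)
    · intro hmem
      exact hx (interior_mono (Set.image_mono hsub) hmem)
end
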